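/- The bounded until of TPTLbP is equivalent to its guarded TPTLP translation: for every timed state sequence ρ, environment ξ, position i ≥ 0, finite bound w ∈ ℕ, and formulae φ₁, φ₂ with x, y, z fresh in φ₁ and φ₂, ρ ⊨^i_ξ φ₁ U_w φ₂ if and only if ρ ⊨^i_ξ x.( z.(z ≤ x + w → φ₁) U y.(y ≤ x + w ∧ φ₂) ). -/
import Mathlib

namespace TPTL

/-- Syntax of TPTLP (plain operators) together with the bounded operators of TPTLbP.
    `le x y c` is the timing constraint `x ≤ y + c`, `leC x c` is `x ≤ c`,
    `cong m x y c` is `x ≡_m y + c`.  Bounds of bounded operators live in `ℕ∞`. -/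
inductive Formula : Type
  | tt | ff
  | prop : ℕ → Formula
  | neg : Formula → Formula
  | or : Formula → Formula → Formula
  | and : Formula → Formula → Formula
  | freeze : ℕ → Formula → Formula
  | le : ℕ → ℕ → ℤ → Formula
  | leC : ℕ → ℤ → Formula
  | cong : ℕ → ℕ → ℕ → ℤ → Formula
  | nxt : Formula → Formula
  | untl : Formula → Formula → Formula
  | rel : Formula → Formula → Formula
  | yst : Formula → Formula
  | snc : Formula → Formula → Formula
  | trg : Formula → Formula → Formula
  | nxtB : ℕ∞ → Formula → Formula
  | wnxtB : ℕ∞ → Formula → Formula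
  | untlB : ℕ∞ → Formula → Formula → Formula
  | relB : ℕ∞ → Formula → Formula → Formula
  | ystB : ℕ∞ → Formula → Formula
  | wystB : ℕ∞ → Formula → Formula
  | sncB : ℕ∞ → Formula → Formula → Formula
  | trgB : ℕ∞ → Formula → Formula → Formula
deriving DecidableEq

/-- Timed state sequences: infinite sequences of states and of monotone, progressing
    natural-number timestamps. -/
structure TSS where
  σ : ℕ → Set ℕ
  τ : ℕ → ℕ
  mono : ∀ i, τ i ≤ τ (i+1)
  progress : ∀ t : ℕ, ∃ i, t ≤ τ i

/-- Environments map variables to (integer) time values. -/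
abbrev Env := ℕ → ℤ

/-- Satisfaction `ρ ⊨^i_ξ φ` for TPTLP and the bounded TPTLbP operators. -/
def sat (ρ : TSS) : Formula → ℕ → Env → Prop
  | .tt, _, _ => True
  | .ff, _, _ => False
  | .prop p, i, _ => p ∈ ρ.σ i
  | .neg φ, i, ξ => ¬ sat ρ φ i ξ
  | .or φ ψ, i, ξ => sat ρ φ i ξ ∨ sat ρ ψ i ξ
  | .and φ ψ, i, ξ => sat ρ φ i ξ ∧ sat ρ ψ i ξ
  | .freeze x φ, i, ξ => sat ρ φ i (Function.update ξ x (ρ.τ i : ℤ))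
  | .le x y c, _, ξ => ξ x ≤ ξ y + c
  | .leC x c, _, ξ => ξ x ≤ c
  | .cong m x y c, _, ξ => (ξ x) % (m : ℤ) = (ξ y + c) % (m : ℤ)
  | .nxt φ, i, ξ => sat ρ φ (i+1) ξ
  | .untl φ ψ, i, ξ => ∃ j, i ≤ j ∧ sat ρ ψ j ξ ∧ ∀ k, i ≤ k → k < j → sat ρ φ k ξ
  | .rel φ ψ, i, ξ => (∀ j, i ≤ j → sat ρ ψ j ξ) ∨
      ∃ k, i ≤ k ∧ sat ρ φ k ξ ∧ ∀ j, i ≤ j → j ≤ k → sat ρ ψ j ξ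
  | .yst φ, i, ξ => 0 < i ∧ sat ρ φ (i-1) ξ
  | .snc φ ψ, i, ξ => ∃ j, j ≤ i ∧ sat ρ ψ j ξ ∧ ∀ k, j < k → k ≤ i → sat ρ φ k ξ
  | .trg φ ψ, i, ξ => (∀ j, j ≤ i → sat ρ ψ j ξ) ∨
      ∃ k, k ≤ i ∧ sat ρ φ k ξ ∧ ∀ j, k ≤ j → j ≤ i → sat ρ ψ j ξ
  | .nxtB w φ, i, ξ => ((ρ.τ (i+1) - ρ.τ i : ℕ) : ℕ∞) ≤ w ∧ sat ρ φ (i+1) ξ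
  | .wnxtB w φ, i, ξ => ((ρ.τ (i+1) - ρ.τ i : ℕ) : ℕ∞) ≤ w → sat ρ φ (i+1) ξ
  | .untlB w φ ψ, i, ξ => ∃ j, i ≤ j ∧ ((ρ.τ j - ρ.τ i : ℕ) : ℕ∞) ≤ w ∧ sat ρ ψ j ξ ∧
      ∀ k, i ≤ k → k < j → sat ρ φ k ξ
  | .relB w φ ψ, i, ξ => (∀ j, i ≤ j → ((ρ.τ j - ρ.τ i : ℕ) : ℕ∞) ≤ w → sat ρ ψ j ξ) ∨
      ∃ k, i ≤ k ∧ ((ρ.τ k - ρ.τ i : ℕ) : ℕ∞) ≤ w ∧ sat ρ φ k ξ ∧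
        ∀ j, i ≤ j → j ≤ k → sat ρ ψ j ξ
  | .ystB w φ, i, ξ => 0 < i ∧ ((ρ.τ i - ρ.τ (i-1) : ℕ) : ℕ∞) ≤ w ∧ sat ρ φ (i-1) ξ
  | .wystB w φ, i, ξ => (0 < i ∧ ((ρ.τ i - ρ.τ (i-1) : ℕ) : ℕ∞) ≤ w) → sat ρ φ (i-1) ξ
  | .sncB w φ ψ, i, ξ => ∃ j, j ≤ i ∧ ((ρ.τ i - ρ.τ j : ℕ) : ℕ∞) ≤ w ∧ sat ρ ψ j ξ ∧
      ∀ k, j < k → k ≤ i → sat ρ φ k ξ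
  | .trgB w φ ψ, i, ξ => (∀ j, j ≤ i → ((ρ.τ i - ρ.τ j : ℕ) : ℕ∞) ≤ w → sat ρ ψ j ξ) ∨
      ∃ k, k ≤ i ∧ ((ρ.τ i - ρ.τ k : ℕ) : ℕ∞) ≤ w ∧ sat ρ φ k ξ ∧
        ∀ j, k ≤ j → j ≤ i → sat ρ ψ j ξ

/-- Free occurrence of a variable in a formula. -/
def FreeIn (v : ℕ) : Formula → Prop
  | .tt | .ff | .prop _ => False
  | .neg φ | .nxt φ | .yst φ => FreeIn v φ
  | .nxtB _ φ | .wnxtB _ φ | .ystB _ φ | .wystB _ φ => FreeIn v φ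
  | .or φ ψ | .and φ ψ | .untl φ ψ | .rel φ ψ | .snc φ ψ | .trg φ ψ => FreeIn v φ ∨ FreeIn v ψ
  | .untlB _ φ ψ | .relB _ φ ψ | .sncB _ φ ψ | .trgB _ φ ψ => FreeIn v φ ∨ FreeIn v ψ
  | .freeze x φ => v ≠ x ∧ FreeIn v φ
  | .le x y _ => v = x ∨ v = y
  | .leC x _ => v = x
  | .cong _ x y _ => v = x ∨ v = y

/-- A formula is closed if no variable occurs free in it. -/
def Closed (φ : Formula) : Prop := ∀ v, ¬ FreeIn v φ

/-- Material implication, as a shortcut. -/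
def Formula.imp (a b : Formula) : Formula := .or (.neg a) b

end TPTL
namespace TPTL

theorem sat_congr (ρ : TSS) : ∀ φ (ξ ξ' : Env),
    (∀ v, FreeIn v φ → ξ v = ξ' v) → ∀ i, sat ρ φ i ξ ↔ sat ρ φ i ξ' := by
  intro φ
  induction φ with
  | tt => intro ξ ξ' h i; simp [sat]
  | ff => intro ξ ξ' h i; simp [sat]
  | prop p => intro ξ ξ' h i; simp [sat]
  | neg φ ih => intro ξ ξ' h i; simp [sat, ih ξ ξ' h]
  | or φ ψ ih1 ih2 => intro ξ ξ' h i
                      simp [sat, ih1 ξ ξ' (fun v hv => h v (Or.inl hv)),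
                        ih2 ξ ξ' (fun v hv => h v (Or.inr hv))]
  | and φ ψ ih1 ih2 => intro ξ ξ' h i
                       simp [sat, ih1 ξ ξ' (fun v hv => h v (Or.inl hv)),
                         ih2 ξ ξ' (fun v hv => h v (Or.inr hv))]
  | freeze x φ ih =>
      intro ξ ξ' h i
      simp only [sat]
      apply ih
      intro v hv
      by_cases hvx : v = x
      · subst hvx; simp [Function.update]
      · simp [Function.update, hvx]
        exact h v ⟨hvx, hv⟩
  | le a b c => intro ξ ξ' h i
                simp only [sat, h a (Or.inl rfl), h b (Or.inr rfl)]
  | leC a c => intro ξ ξ' h i; simp only [sat, h a rfl]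
  | cong m a b c => intro ξ ξ' h i
                    simp only [sat, h a (Or.inl rfl), h b (Or.inr rfl)]
  | nxt φ ih => intro ξ ξ' h i; simp [sat, ih ξ ξ' h]
  | untl φ ψ ih1 ih2 => intro ξ ξ' h i
                        simp only [sat, ih1 ξ ξ' (fun v hv => h v (Or.inl hv)),
                          ih2 ξ ξ' (fun v hv => h v (Or.inr hv))]
  | rel φ ψ ih1 ih2 => intro ξ ξ' h i
                       simp only [sat, ih1 ξ ξ' (fun v hv => h v (Or.inl hv)),
                         ih2 ξ ξ' (fun v hv => h v (Or.inr hv))]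
  | yst φ ih => intro ξ ξ' h i; simp [sat, ih ξ ξ' h]
  | snc φ ψ ih1 ih2 => intro ξ ξ' h i
                       simp only [sat, ih1 ξ ξ' (fun v hv => h v (Or.inl hv)),
                         ih2 ξ ξ' (fun v hv => h v (Or.inr hv))]
  | trg φ ψ ih1 ih2 => intro ξ ξ' h i
                       simp only [sat, ih1 ξ ξ' (fun v hv => h v (Or.inl hv)),
                         ih2 ξ ξ' (fun v hv => h v (Or.inr hv))]
  | nxtB w φ ih => intro ξ ξ' h i; simp [sat, ih ξ ξ' h]
  | wnxtB w φ ih => intro ξ ξ' h i; simp [sat, ih ξ ξ' h]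
  | untlB w φ ψ ih1 ih2 => intro ξ ξ' h i
                           simp only [sat, ih1 ξ ξ' (fun v hv => h v (Or.inl hv)),
                             ih2 ξ ξ' (fun v hv => h v (Or.inr hv))]
  | relB w φ ψ ih1 ih2 => intro ξ ξ' h i
                          simp only [sat, ih1 ξ ξ' (fun v hv => h v (Or.inl hv)),
                            ih2 ξ ξ' (fun v hv => h v (Or.inr hv))]
  | ystB w φ ih => intro ξ ξ' h i; simp [sat, ih ξ ξ' h]
  | wystB w φ ih => intro ξ ξ' h i; simp [sat, ih ξ ξ' h]
  | sncB w φ ψ ih1 ih2 => intro ξ ξ' h i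
                          simp only [sat, ih1 ξ ξ' (fun v hv => h v (Or.inl hv)),
                            ih2 ξ ξ' (fun v hv => h v (Or.inr hv))]
  | trgB w φ ψ ih1 ih2 => intro ξ ξ' h i
                          simp only [sat, ih1 ξ ξ' (fun v hv => h v (Or.inl hv)),
                            ih2 ξ ξ' (fun v hv => h v (Or.inr hv))]

/-- The bounded until of TPTLbP is equivalent to its guarded TPTLP
    translation: `φ₁ U_w φ₂  ≡  x.( z.(z ≤ x + w → φ₁) U y.(y ≤ x + w ∧ φ₂) )`
    for fresh, pairwise distinct variables `x, y, z`. -/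
theorem untlB_guarded_translation (ρ : TSS) (ξ : Env) (i : ℕ) (w : ℕ)
    (φ1 φ2 : Formula) (x y z : ℕ)
    (hxy : x ≠ y) (hxz : x ≠ z) (hyz : y ≠ z)
    (hx1 : ¬ FreeIn x φ1) (hx2 : ¬ FreeIn x φ2)
    (hy1 : ¬ FreeIn y φ1) (hy2 : ¬ FreeIn y φ2)
    (hz1 : ¬ FreeIn z φ1) (hz2 : ¬ FreeIn z φ2) :
    sat ρ (.untlB (w : ℕ∞) φ1 φ2) i ξ ↔
      sat ρ (.freeze x (.untl (.freeze z (Formula.imp (.le z x (w : ℤ)) φ1))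
                              (.freeze y (.and (.le y x (w : ℤ)) φ2)))) i ξ := by
  have τmono : Monotone ρ.τ := monotone_nat_of_le_succ ρ.mono
  have hB : ∀ j, sat ρ (Formula.freeze y (.and (.le y x (w : ℤ)) φ2)) j
      (Function.update ξ x (ρ.τ i : ℤ)) ↔
      ((ρ.τ j : ℤ) ≤ (ρ.τ i : ℤ) + w ∧ sat ρ φ2 j ξ) := by
    intro j
    have hc := sat_congr ρ φ2
      (Function.update (Function.update ξ x (ρ.τ i : ℤ)) y (ρ.τ j : ℤ)) ξ
      (fun v hv => by
        rw [Function.update_of_ne (fun h : v = y => hy2 (h ▸ hv)),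
          Function.update_of_ne (fun h : v = x => hx2 (h ▸ hv))]) j
    simp only [sat, Function.update_self, Function.update_of_ne hxy, hc]
  have hA : ∀ k, sat ρ (Formula.freeze z (Formula.imp (.le z x (w : ℤ)) φ1)) k
      (Function.update ξ x (ρ.τ i : ℤ)) ↔
      (¬ ((ρ.τ k : ℤ) ≤ (ρ.τ i : ℤ) + w) ∨ sat ρ φ1 k ξ) := by
    intro k
    have hc := sat_congr ρ φ1
      (Function.update (Function.update ξ x (ρ.τ i : ℤ)) z (ρ.τ k : ℤ)) ξ
      (fun v hv => by
        rw [Function.update_of_ne (fun h : v = z => hz1 (h ▸ hv)),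
          Function.update_of_ne (fun h : v = x => hx1 (h ▸ hv))]) k
    simp only [Formula.imp, sat, Function.update_self, Function.update_of_ne hxz, hc]
  have main : sat ρ (.freeze x (.untl (.freeze z (Formula.imp (.le z x (w : ℤ)) φ1))
                              (.freeze y (.and (.le y x (w : ℤ)) φ2)))) i ξ ↔
      ∃ j, i ≤ j ∧ sat ρ (Formula.freeze y (.and (.le y x (w : ℤ)) φ2)) j
          (Function.update ξ x (ρ.τ i : ℤ)) ∧
        ∀ k, i ≤ k → k < j → sat ρ (Formula.freeze z (Formula.imp (.le z x (w : ℤ)) φ1)) k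
          (Function.update ξ x (ρ.τ i : ℤ)) := Iff.rfl
  rw [main]
  simp only [hA, hB]
  constructor
  · rintro ⟨j, hij, hw, h2, h1⟩
    have hw' : ρ.τ j - ρ.τ i ≤ w := by exact_mod_cast hw
    have hji : ρ.τ i ≤ ρ.τ j := τmono hij
    refine ⟨j, hij, ⟨by push_cast; omega, h2⟩, fun k hik hkj => Or.inr (h1 k hik hkj)⟩
  · rintro ⟨j, hij, ⟨hτ, h2⟩, h1⟩
    have hτ' : ρ.τ j ≤ ρ.τ i + w := by exact_mod_cast hτ
    refine ⟨j, hij, by exact_mod_cast Nat.cast_le.mpr (by omega : ρ.τ j - ρ.τ i ≤ w), h2,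
      fun k hik hkj => ?_⟩
    have hkτ : ρ.τ k ≤ ρ.τ j := τmono hkj.le
    rcases h1 k hik hkj with h | h
    · exact absurd (by push_cast; omega) h
    · exact h


end TPTL
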